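/- Let χ : ℝ⁴ → M_n(ℂ) be a map that is differentiable at a point x ∈ ℝ⁴, and suppose χ(x) is skew-Hermitian, i.e. χ(x)ᴴ = −χ(x). Then the composite map y ↦ exp(χ(y)) is differentiable at x, and its derivative D(exp ∘ χ)(x) satisfies ‖D(exp ∘ χ)(x)‖ ≤ (1 + ‖χ(x)‖) · ‖Dχ(x)‖, where ‖Dχ(x)‖ and ‖D(exp ∘ χ)(x)‖ are operator norms of the Fréchet derivatives and ‖χ(x)‖ is the operator norm of the matrix χ(x). -/

import Mathlib

open scoped Matrix.Norms.L2Operator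
open NormedSpace

set_option maxHeartbeats 1000000 in
lemma exp_sub_exp_skew_aux (n : ℕ) (A H : Matrix (Fin n) (Fin n) ℂ)
    (hA : star A = -A) :
    ‖exp (A + H) - exp A‖ ≤ Real.exp ‖H‖ - 1 := by
  letI : NormedAlgebra ℚ (Matrix (Fin n) (Fin n) ℂ) := .restrictScalars ℚ ℂ _
  rcases eq_or_ne H 0 with rfl | hH
  · simp
  set B := A + H with hB
  have hskew : ∀ s : ℝ, ∀ C : Matrix (Fin n) (Fin n) ℂ, star C = -C →
      s • C ∈ skewAdjoint (Matrix (Fin n) (Fin n) ℂ) := by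
    intro s C hC
    rw [skewAdjoint.mem_iff, star_smul, hC]; simp
  have hA' : star (-A) = -(-A) := by rw [star_neg, hA]
  have hU : ∀ s : ℝ, exp (s • (-A)) ∈ unitary (Matrix (Fin n) (Fin n) ℂ) := fun s =>
    exp_mem_unitary_of_mem_skewAdjoint (hskew s _ hA')
  have hUA : ∀ s : ℝ, exp (s • A) ∈ unitary (Matrix (Fin n) (Fin n) ℂ) := fun s =>
    exp_mem_unitary_of_mem_skewAdjoint (hskew s _ hA)
  set F : ℝ → Matrix (Fin n) (Fin n) ℂ := fun s => exp (s • (-A)) * exp (s • B) with hF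
  have hinv : ∀ s : ℝ, exp (s • A) * exp (s • (-A)) = 1 := by
    intro s
    rw [← exp_add_of_commute (by rw [smul_neg]; exact (Commute.refl _).neg_right)]
    simp
  have hEB : ∀ s : ℝ, exp (s • B) = exp (s • A) * F s := by
    intro s
    rw [hF]
    rw [← mul_assoc, hinv s, one_mul]
  have hderiv : ∀ s : ℝ, HasDerivAt F (exp (s • (-A)) * H * exp (s • B)) s := by
    intro s
    have h1 := hasDerivAt_exp_smul_const' (-A) s
    have h2 := hasDerivAt_exp_smul_const' B s
    have h3 := h1.mul h2
    convert h3 using 1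
    case e'_4 | e'_5 | e'_6 | e'_8 => rfl
    have hc : (-A) * exp (s • (-A)) = exp (s • (-A)) * (-A) :=
      (((Commute.refl (-A)).smul_right s).exp_right).eq
    have hHB : H = (-A) + B := by rw [hB]; abel
    rw [hc, hHB]
    noncomm_ring
  have h1le : ‖(1 : Matrix (Fin n) (Fin n) ℂ)‖ ≤ 1 := by
    have h := CStarRing.norm_star_mul_self (x := (1 : Matrix (Fin n) (Fin n) ℂ))
    simp only [star_one, one_mul] at h
    nlinarith [norm_nonneg (1 : Matrix (Fin n) (Fin n) ℂ)]
  have hbound : ∀ s ∈ Set.Ico (0:ℝ) 1,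
      ‖exp (s • (-A)) * H * exp (s • B)‖ ≤ ‖H‖ * ‖F s - 1‖ + ‖H‖ := by
    intro s _
    rw [mul_assoc, CStarRing.norm_coe_unitary_mul ⟨_, hU s⟩ (H * exp (s • B))]
    calc ‖H * exp (s • B)‖ ≤ ‖H‖ * ‖exp (s • B)‖ := norm_mul_le _ _
      _ = ‖H‖ * ‖F s‖ := by
          rw [hEB s, CStarRing.norm_coe_unitary_mul ⟨_, hUA s⟩ (F s)]
      _ ≤ ‖H‖ * (‖F s - 1‖ + 1) := by
          have h4 : ‖F s‖ ≤ ‖F s - 1‖ + 1 := by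
            calc ‖F s‖ = ‖(F s - 1) + 1‖ := by rw [sub_add_cancel]
              _ ≤ ‖F s - 1‖ + ‖(1:Matrix (Fin n) (Fin n) ℂ)‖ := norm_add_le _ _
              _ ≤ ‖F s - 1‖ + 1 := by linarith
          exact mul_le_mul_of_nonneg_left h4 (norm_nonneg H)
      _ = ‖H‖ * ‖F s - 1‖ + ‖H‖ := by ring
  have hgron := norm_le_gronwallBound_of_norm_deriv_right_le
    (f := fun s => F s - 1) (f' := fun s => exp (s • (-A)) * H * exp (s • B))
    (δ := 0) (K := ‖H‖) (ε := ‖H‖) (a := 0) (b := 1)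
    (fun s _ => (((hderiv s).sub_const 1).continuousAt).continuousWithinAt)
    (fun s _ => (((hderiv s).sub_const 1).hasDerivWithinAt))
    (by simp [hF, exp_zero])
    hbound
  have hHn : ‖H‖ ≠ 0 := by simpa using hH
  have h1 : ‖F 1 - 1‖ ≤ Real.exp ‖H‖ - 1 := by
    have h5 := hgron 1 (by norm_num)
    simp only [gronwallBound_of_K_ne_0 hHn] at h5
    rw [div_self hHn] at h5
    simpa using h5
  calc ‖exp (A + H) - exp A‖ = ‖exp ((1:ℝ) • A) * (F 1 - 1)‖ := by
        rw [mul_sub, ← hEB 1, mul_one]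
        simp [one_smul, hB]
    _ = ‖F 1 - 1‖ := CStarRing.norm_coe_unitary_mul ⟨_, hUA 1⟩ _
    _ ≤ Real.exp ‖H‖ - 1 := h1


/-- Pointwise derivative estimate for the exponential of a matrix-valued map (cf. Lemma 7.1 (1)
of the paper): if `χ` is differentiable at `x` and `χ x` is skew-Hermitian, then
`exp ∘ χ` is differentiable at `x` and `‖D(exp ∘ χ)(x)‖ ≤ (1 + ‖χ x‖) ‖Dχ(x)‖`. -/
theorem fderiv_exp_comp_estimate_skewHermitian
    (n : ℕ) (χ : EuclideanSpace ℝ (Fin 4) → Matrix (Fin n) (Fin n) ℂ)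
    (x : EuclideanSpace ℝ (Fin 4)) (hχ : DifferentiableAt ℝ χ x)
    (hskew : (χ x).conjTranspose = -(χ x)) :
    DifferentiableAt ℝ (fun y => NormedSpace.exp (χ y)) x ∧
    ‖fderiv ℝ (fun y => NormedSpace.exp (χ y)) x‖ ≤ (1 + ‖χ x‖) * ‖fderiv ℝ χ x‖ := by
  have hstar : star (χ x) = -(χ x) := hskew
  have hdexp : DifferentiableAt ℂ exp (χ x) :=
    (exp_analytic (χ x)).differentiableAt
  have hdiff : DifferentiableAt ℝ (fun y => exp (χ y)) x :=
    (hdexp.restrictScalars ℝ).comp x hχ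
  refine ⟨hdiff, ?_⟩
  set L := ‖fderiv ℝ χ x‖ with hL
  have hL0 : 0 ≤ L := norm_nonneg _
  have key : ‖fderiv ℝ (fun y => exp (χ y)) x‖ ≤ L := by
    refine le_of_forall_pos_le_add fun ε hε => ?_
    set ε' : ℝ := min ε 1 / (L + 2) with hε'
    have hε'0 : 0 < ε' := by positivity
    have hδ0 : 0 < Real.log (1 + ε') := Real.log_pos (by linarith)
    have hC0 : 0 ≤ (1 + ε') * (L + ε') := by positivity
    have hbound := hdiff.hasFDerivAt.le_of_lip' hC0 ?_
    · refine hbound.trans ?_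
      have hε'1 : ε' ≤ 1 := by
        rw [hε', div_le_one (by linarith)]
        calc min ε 1 ≤ 1 := min_le_right _ _
          _ ≤ L + 2 := by linarith
      have : ε' * (L + 2) ≤ ε := by
        rw [hε', div_mul_cancel₀ _ (by linarith : L + 2 ≠ 0)]
        exact min_le_left _ _
      nlinarith
    · -- eventually ‖exp (χ y) - exp (χ x)‖ ≤ (1+ε')*(L+ε')*‖y - x‖
      have h1 : ∀ᶠ y in nhds x, ‖χ y - χ x - (fderiv ℝ χ x) (y - x)‖ ≤ ε' * ‖y - x‖ :=
        hχ.hasFDerivAt.isLittleO.def hε'0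
      have h2 : ∀ᶠ y in nhds x, ‖χ y - χ x‖ < Real.log (1 + ε') := by
        have hc : ContinuousAt χ x := hχ.continuousAt
        have := Metric.tendsto_nhds.mp hc _ hδ0
        filter_upwards [this] with y hy
        rwa [dist_eq_norm] at hy
      filter_upwards [h1, h2] with y hy1 hy2
      have hnorm : ‖χ y - χ x‖ ≤ (L + ε') * ‖y - x‖ := by
        calc ‖χ y - χ x‖ ≤ ‖(fderiv ℝ χ x) (y - x)‖ + ‖χ y - χ x - (fderiv ℝ χ x) (y - x)‖ :=
              norm_le_insert' _ _
          _ ≤ L * ‖y - x‖ + ε' * ‖y - x‖ :=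
              add_le_add ((fderiv ℝ χ x).le_opNorm _) hy1
          _ = (L + ε') * ‖y - x‖ := by ring
      set h : ℝ := ‖χ y - χ x‖ with hh
      have hhn : 0 ≤ h := norm_nonneg _
      have hexp : ‖exp (χ y) - exp (χ x)‖ ≤ Real.exp h - 1 := by
        have := exp_sub_exp_skew_aux n (χ x) (χ y - χ x) hstar
        simpa [add_sub_cancel] using this
      have hexp2 : Real.exp h - 1 ≤ (1 + ε') * h := by
        have h3 : Real.exp h ≤ 1 + ε' := by
          calc Real.exp h ≤ Real.exp (Real.log (1 + ε')) :=
                Real.exp_le_exp.mpr hy2.le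
            _ = 1 + ε' := Real.exp_log (by linarith)
        have h4 : Real.exp h - 1 ≤ h * Real.exp h := by
          have ha : -h + 1 ≤ Real.exp (-h) := Real.add_one_le_exp (-h)
          have hm : Real.exp (-h) * Real.exp h = 1 := by
            rw [← Real.exp_add]; simp
          nlinarith [mul_nonneg (sub_nonneg.2 ha) (Real.exp_pos h).le]
        calc Real.exp h - 1 ≤ h * Real.exp h := h4
          _ ≤ h * (1 + ε') := mul_le_mul_of_nonneg_left h3 hhn
          _ = (1 + ε') * h := by ring
      calc ‖exp (χ y) - exp (χ x)‖ ≤ Real.exp h - 1 := hexp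
        _ ≤ (1 + ε') * h := hexp2
        _ ≤ (1 + ε') * ((L + ε') * ‖y - x‖) :=
            mul_le_mul_of_nonneg_left hnorm (by linarith)
        _ = (1 + ε') * (L + ε') * ‖y - x‖ := by ring
  calc ‖fderiv ℝ (fun y => exp (χ y)) x‖ ≤ L := key
    _ ≤ (1 + ‖χ x‖) * L := le_mul_of_one_le_left hL0 (by linarith [norm_nonneg (χ x)])
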